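/- (Crossing relations.) Let t be a GT n-parallelogram framed by P/Q and let i ∈ {1,…,n−1}. Then Σ_{s : s →^i t} X_{t,s}·Y_{s,t} − Σ_{u : t →^i u} X_{u,t}·Y_{t,u} = 2·Σ_{k∈C_i} g_{i,k}(t) − Σ_{k∈C_{i+1}} g_{i+1,k}(t) − Σ_{k∈C_{i−1}} g_{i−1,k}(t), where the first sum runs over all GT n-parallelograms s framed by P/Q with s →^i t and the second sum runs over all GT n-parallelograms u framed by P/Q with t →^i u. -/

import Mathlib

open Finset
open scoped Classical

def IsGT (m n : ℕ) (P Q : ℕ → ℤ) (g : ℕ → ℕ → ℤ) : Prop :=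
  (∀ k < m, g 0 k = Q (k + 1)) ∧
  (∀ k < m, g n k = P (k + 1)) ∧
  (∀ i < n, ∀ k < m, g i k ≤ g (i + 1) k) ∧
  (∀ i < n, ∀ k, k + 1 < m → g (i + 1) (k + 1) ≤ g i k) ∧
  (∀ i k, n < i ∨ m ≤ k → g i k = 0)

def ShapeHyps (m n : ℕ) (P Q : ℕ → ℤ) : Prop :=
  2 ≤ n ∧ n ≤ m ∧
  (∀ r, 1 ≤ r → r < m → P (r + 1) ≤ P r) ∧ 0 ≤ P m ∧
  (∀ r, 1 ≤ r → r < m → Q (r + 1) ≤ Q r) ∧ 0 ≤ Q m ∧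
  (∀ r, 1 ≤ r → r ≤ m → Q r ≤ P r) ∧
  (∀ c : ℤ, ((Finset.Icc 1 m).filter (fun r => Q r < c ∧ c ≤ P r)).card ≤ n)

/-- `s →^i t` with the changed entry in slot `κ` of column `i`. -/
def EdgeAt (m i : ℕ) (s t : ℕ → ℕ → ℤ) (κ : ℕ) : Prop :=
  κ < m ∧ s i κ + 1 = t i κ ∧ ∀ p q, ¬(p = i ∧ q = κ) → s p q = t p q

/-- The edge relation `s →^i t` of color `i`. -/
def Edge (m i : ℕ) (s t : ℕ → ℕ → ℤ) : Prop :=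
  ∃ κ, EdgeAt m i s t κ

/-- The coefficient `X_{t,s}` for an edge `s →^i t` whose changed entry is in
slot `κ` of column `i` (in terms of the entries of `t`). -/
noncomputable def Xcoef (m i κ : ℕ) (g : ℕ → ℕ → ℤ) : ℚ :=
  - (∏ l ∈ Finset.range m, ((g i κ - g (i + 1) l + l - κ - 1 : ℤ) : ℚ)) /
    (∏ l ∈ (Finset.range m).erase κ, ((g i κ - g i l + l - κ - 1 : ℤ) : ℚ))

/-- The coefficient `Y_{s,t}` for an edge `s →^i t` whose changed entry is in
slot `κ` of column `i` (in terms of the entries of `t`). -/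
noncomputable def Ycoef (m i κ : ℕ) (g : ℕ → ℕ → ℤ) : ℚ :=
  (∏ l ∈ Finset.range m, ((g i κ - g (i - 1) l + l - κ : ℤ) : ℚ)) /
    (∏ l ∈ (Finset.range m).erase κ, ((g i κ - g i l + l - κ : ℤ) : ℚ))

/-- `X_{t,s}` as a function of the pair `(s,t)`: the coefficient of the edge
`s →^i t` when it exists, and `0` otherwise. -/
noncomputable def XE (m i : ℕ) (s t : ℕ → ℕ → ℤ) : ℚ :=
  if h : Edge m i s t then Xcoef m i h.choose t else 0

/-- `Y_{s,t}` as a function of the pair `(s,t)`. -/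
noncomputable def YE (m i : ℕ) (s t : ℕ → ℕ → ℤ) : ℚ :=
  if h : Edge m i s t then Ycoef m i h.choose t else 0

/-- lower the entry of `t` at `(i,κ)` by one. -/
def lowerAt (t : ℕ → ℕ → ℤ) (i κ : ℕ) : ℕ → ℕ → ℤ :=
  fun p q => if p = i ∧ q = κ then t i κ - 1 else t p q

/-- raise the entry of `t` at `(i,κ)` by one. -/
def raiseAt (t : ℕ → ℕ → ℤ) (i κ : ℕ) : ℕ → ℕ → ℤ :=
  fun p q => if p = i ∧ q = κ then t i κ + 1 else t p q

lemma lowerAt_self (t : ℕ → ℕ → ℤ) (i κ : ℕ) : lowerAt t i κ i κ = t i κ - 1 := by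
  simp [lowerAt]

lemma lowerAt_ne (t : ℕ → ℕ → ℤ) (i κ : ℕ) {p q : ℕ} (h : ¬(p = i ∧ q = κ)) :
    lowerAt t i κ p q = t p q := by simp [lowerAt, h]

lemma raiseAt_self (t : ℕ → ℕ → ℤ) (i κ : ℕ) : raiseAt t i κ i κ = t i κ + 1 := by
  simp [raiseAt]

lemma raiseAt_ne (t : ℕ → ℕ → ℤ) (i κ : ℕ) {p q : ℕ} (h : ¬(p = i ∧ q = κ)) :
    raiseAt t i κ p q = t p q := by simp [raiseAt, h]

lemma edgeAt_lowerAt (m i κ : ℕ) (t : ℕ → ℕ → ℤ) (hκ : κ < m) :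
    EdgeAt m i (lowerAt t i κ) t κ :=
  ⟨hκ, by simp [lowerAt], fun p q h => lowerAt_ne t i κ h⟩

lemma edgeAt_raiseAt (m i κ : ℕ) (t : ℕ → ℕ → ℤ) (hκ : κ < m) :
    EdgeAt m i t (raiseAt t i κ) κ :=
  ⟨hκ, by simp [raiseAt], fun p q h => (raiseAt_ne t i κ h).symm⟩

lemma EdgeAt.kappa_eq {m i : ℕ} {s t : ℕ → ℕ → ℤ} {κ κ' : ℕ}
    (h : EdgeAt m i s t κ) (h' : EdgeAt m i s t κ') : κ = κ' := by
  by_contra hne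
  have h1 := h'.2.2 i κ (by simp [hne])
  have h2 := h.2.1
  omega

lemma EdgeAt.left_eq {m i : ℕ} {s t : ℕ → ℕ → ℤ} {κ : ℕ}
    (h : EdgeAt m i s t κ) : s = lowerAt t i κ := by
  funext p q
  by_cases hpq : p = i ∧ q = κ
  · obtain ⟨rfl, rfl⟩ := hpq
    rw [lowerAt_self]
    have := h.2.1
    omega
  · rw [lowerAt_ne t i κ hpq, h.2.2 p q hpq]

lemma EdgeAt.right_eq {m i : ℕ} {t u : ℕ → ℕ → ℤ} {κ : ℕ}
    (h : EdgeAt m i t u κ) : u = raiseAt t i κ := by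
  funext p q
  by_cases hpq : p = i ∧ q = κ
  · obtain ⟨rfl, rfl⟩ := hpq
    rw [raiseAt_self]
    have := h.2.1
    omega
  · rw [raiseAt_ne t i κ hpq, (h.2.2 p q hpq).symm]

lemma XE_eq {m i : ℕ} {s t : ℕ → ℕ → ℤ} {κ : ℕ} (h : EdgeAt m i s t κ) :
    XE m i s t = Xcoef m i κ t := by
  have hE : Edge m i s t := ⟨κ, h⟩
  rw [XE, dif_pos hE, hE.choose_spec.kappa_eq h]

lemma YE_eq {m i : ℕ} {s t : ℕ → ℕ → ℤ} {κ : ℕ} (h : EdgeAt m i s t κ) :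
    YE m i s t = Ycoef m i κ t := by
  have hE : Edge m i s t := ⟨κ, h⟩
  rw [YE, dif_pos hE, hE.choose_spec.kappa_eq h]

lemma isGT_lowerAt (m n : ℕ) (P Q : ℕ → ℤ) (t : ℕ → ℕ → ℤ) (ht : IsGT m n P Q t)
    (i κ : ℕ) (hi1 : 1 ≤ i) (hi2 : i < n) (hκ : κ < m)
    (h1 : t (i - 1) κ ≤ t i κ - 1) (h2 : κ + 1 < m → t (i + 1) (κ + 1) ≤ t i κ - 1) :
    IsGT m n P Q (lowerAt t i κ) := by
  obtain ⟨htQ, htP, ht3, ht4, ht5⟩ := ht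
  refine ⟨?_, ?_, ?_, ?_, ?_⟩
  · intro k hk
    rw [lowerAt_ne t i κ (by omega), htQ k hk]
  · intro k hk
    rw [lowerAt_ne t i κ (by omega), htP k hk]
  · intro j hj k hk
    by_cases hjk : j = i ∧ k = κ
    · obtain ⟨rfl, rfl⟩ := hjk
      rw [lowerAt_self, lowerAt_ne t j k (by omega)]
      have := ht3 j hj k hk
      omega
    · rw [lowerAt_ne t i κ hjk]
      by_cases hjk' : j + 1 = i ∧ k = κ
      · obtain ⟨hj1, rfl⟩ := hjk'
        rw [hj1, lowerAt_self]
        have := h1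
        rw [show i - 1 = j from by omega] at this
        omega
      · rw [lowerAt_ne t i κ hjk']
        exact ht3 j hj k hk
  · intro j hj k hk
    by_cases hjk : j = i ∧ k = κ
    · obtain ⟨rfl, rfl⟩ := hjk
      rw [lowerAt_self, lowerAt_ne t j k (by omega)]
      exact h2 hk
    · rw [lowerAt_ne t i κ hjk]
      by_cases hjk' : j + 1 = i ∧ k + 1 = κ
      · obtain ⟨hj1, hk1⟩ := hjk'
        rw [hj1, hk1, lowerAt_self]
        have h4 := ht4 j hj k hk
        rw [hj1, hk1] at h4
        omega
      · rw [lowerAt_ne t i κ hjk']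
        exact ht4 j hj k hk
  · intro j k hjk
    rw [lowerAt_ne t i κ (by rintro ⟨rfl, rfl⟩; omega)]
    exact ht5 j k hjk

lemma isGT_raiseAt (m n : ℕ) (P Q : ℕ → ℤ) (t : ℕ → ℕ → ℤ) (ht : IsGT m n P Q t)
    (i κ : ℕ) (hi1 : 1 ≤ i) (hi2 : i < n) (hκ : κ < m)
    (h1 : t i κ + 1 ≤ t (i + 1) κ) (h2 : 1 ≤ κ → t i κ + 1 ≤ t (i - 1) (κ - 1)) :
    IsGT m n P Q (raiseAt t i κ) := by
  obtain ⟨htQ, htP, ht3, ht4, ht5⟩ := ht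
  refine ⟨?_, ?_, ?_, ?_, ?_⟩
  · intro k hk
    rw [raiseAt_ne t i κ (by omega), htQ k hk]
  · intro k hk
    rw [raiseAt_ne t i κ (by omega), htP k hk]
  · intro j hj k hk
    by_cases hjk : j = i ∧ k = κ
    · obtain ⟨rfl, rfl⟩ := hjk
      rw [raiseAt_self, raiseAt_ne t j k (by omega)]
      exact h1
    · rw [raiseAt_ne t i κ hjk]
      by_cases hjk' : j + 1 = i ∧ k = κ
      · obtain ⟨hj1, rfl⟩ := hjk'
        rw [hj1, raiseAt_self]
        have h3 := ht3 j hj k hk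
        rw [hj1] at h3
        omega
      · rw [raiseAt_ne t i κ hjk']
        exact ht3 j hj k hk
  · intro j hj k hk
    by_cases hjk : j = i ∧ k = κ
    · obtain ⟨rfl, rfl⟩ := hjk
      rw [raiseAt_self, raiseAt_ne t j k (by omega)]
      have := ht4 j hj k hk
      omega
    · rw [raiseAt_ne t i κ hjk]
      by_cases hjk' : j + 1 = i ∧ k + 1 = κ
      · obtain ⟨hj1, hk1⟩ := hjk'
        rw [hj1, hk1, raiseAt_self]
        have h5 := h2 (by omega)
        rw [show i - 1 = j from by omega, show κ - 1 = k from by omega] at h5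
        omega
      · rw [raiseAt_ne t i κ hjk']
        exact ht4 j hj k hk
  · intro j k hjk
    rw [raiseAt_ne t i κ (by rintro ⟨rfl, rfl⟩; omega)]
    exact ht5 j k hjk

lemma lowOK_of_isGT (m n : ℕ) (P Q : ℕ → ℤ) (s t : ℕ → ℕ → ℤ)
    (hs : IsGT m n P Q s) (i κ : ℕ) (hi1 : 1 ≤ i) (hi2 : i < n)
    (he : EdgeAt m i s t κ) :
    t (i - 1) κ ≤ t i κ - 1 ∧ (κ + 1 < m → t (i + 1) (κ + 1) ≤ t i κ - 1) := by
  have hκ := he.1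
  have hsv := he.2.1
  have h3 := hs.2.2.1 (i - 1) (by omega) κ hκ
  rw [show i - 1 + 1 = i by omega] at h3
  have hs1 : s (i - 1) κ = t (i - 1) κ := he.2.2 (i - 1) κ (by omega)
  constructor
  · omega
  · intro hκ1
    have h4 := hs.2.2.2.1 i hi2 κ hκ1
    have hs2 : s (i + 1) (κ + 1) = t (i + 1) (κ + 1) := he.2.2 (i + 1) (κ + 1) (by omega)
    omega

lemma highOK_of_isGT (m n : ℕ) (P Q : ℕ → ℤ) (t u : ℕ → ℕ → ℤ)
    (hu : IsGT m n P Q u) (i κ : ℕ) (hi1 : 1 ≤ i) (hi2 : i < n)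
    (he : EdgeAt m i t u κ) :
    t i κ + 1 ≤ t (i + 1) κ ∧ (1 ≤ κ → t i κ + 1 ≤ t (i - 1) (κ - 1)) := by
  have hκ := he.1
  have hsv := he.2.1
  have h3 := hu.2.2.1 i hi2 κ hκ
  have hu1 : u (i + 1) κ = t (i + 1) κ := (he.2.2 (i + 1) κ (by omega)).symm
  constructor
  · omega
  · intro hκ1
    have h4 := hu.2.2.2.1 (i - 1) (by omega) (κ - 1) (by omega)
    rw [show i - 1 + 1 = i by omega, show κ - 1 + 1 = κ by omega] at h4
    have hu2 : u (i - 1) (κ - 1) = t (i - 1) (κ - 1) := (he.2.2 (i - 1) (κ - 1) (by omega)).symm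
    omega

open Polynomial in

lemma key {ι : Type*} (s : Finset ℚ) (hs : s.Nonempty) (B : Finset ι) (β : ι → ℚ)
    (hcard : B.card = s.card) :
    ∑ p ∈ s, (∏ b ∈ B, (p - β b)) / ∏ q ∈ s.erase p, (p - q)
      = ∑ p ∈ s, p - ∑ b ∈ B, β b := by
  classical
  set N : ℚ[X] := ∏ b ∈ B, (X - C (β b)) with hN
  have hNmonic : N.Monic := monic_prod_of_monic _ _ fun b _ => monic_X_sub_C _
  have hNdeg : N.natDegree = s.card := by
    rw [hN, natDegree_prod _ _ fun b _ => X_sub_C_ne_zero _]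
    simp [hcard]
  have hscard : 0 < s.card := Finset.card_pos.mpr hs
  have hinj : Set.InjOn (id : ℚ → ℚ) s := Function.injective_id.injOn
  set T : ℚ[X] := N - Lagrange.nodal s id with hT
  have hdegT : T.degree < (s.card : WithBot ℕ) := by
    have h1 : N.degree = (s.card : WithBot ℕ) := by
      rw [degree_eq_natDegree hNmonic.ne_zero, hNdeg]
    have h2 : N.degree = (Lagrange.nodal s id).degree := by
      rw [h1, Lagrange.degree_nodal]
    have := degree_sub_lt h2 hNmonic.ne_zero
      (by rw [hNmonic.leadingCoeff, (Lagrange.nodal_monic).leadingCoeff])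
    rwa [h1] at this
  have hTi : T = Lagrange.interpolate s id (fun p => T.eval p) :=
    Lagrange.eq_interpolate hinj hdegT
  -- take coefficient `s.card - 1` on both sides
  have hcoeff := congrArg (fun f => Polynomial.coeff f (s.card - 1)) hTi
  simp only [Lagrange.interpolate_apply, Polynomial.finset_sum_coeff,
    Polynomial.coeff_C_mul] at hcoeff
  -- basis coefficient
  have hbasis : ∀ p ∈ s, (Lagrange.basis s id p).coeff (s.card - 1)
      = ∏ q ∈ s.erase p, (p - q)⁻¹ := by
    intro p hp
    rw [Lagrange.basis_eq_prod_sub_inv_mul_nodal_div hp,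
      ← Lagrange.nodal_erase_eq_nodal_div hp, Polynomial.coeff_C_mul]
    have hmon : (Lagrange.nodal (s.erase p) id).Monic := Lagrange.nodal_monic
    have hdeg : (Lagrange.nodal (s.erase p) id).natDegree = s.card - 1 := by
      rw [Lagrange.natDegree_nodal, card_erase_of_mem hp]
    rw [← hdeg, hmon.coeff_natDegree, mul_one]
    simp [Lagrange.nodalWeight]
  -- LHS coefficient
  have hTc : T.coeff (s.card - 1) = (-∑ b ∈ B, β b) - (-∑ p ∈ s, p) := by
    have h2 : N.coeff (s.card - 1) = -∑ b ∈ B, β b := by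
      have := prod_X_sub_C_coeff_card_pred B β (hcard ▸ hscard)
      rwa [hcard] at this
    have h3 : (Lagrange.nodal s id).coeff (s.card - 1) = -∑ p ∈ s, p := by
      have := prod_X_sub_C_coeff_card_pred s (id : ℚ → ℚ) hscard
      simpa [Lagrange.nodal_eq] using this
    rw [hT, Polynomial.coeff_sub, h2, h3]
  have heval : ∀ p ∈ s, T.eval p = N.eval p := by
    intro p hp
    have h0 : (Lagrange.nodal s id).eval p = 0 := by
      simpa using Lagrange.eval_nodal_at_node (v := (id : ℚ → ℚ)) hp
    rw [hT, Polynomial.eval_sub, h0, sub_zero]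
  calc ∑ p ∈ s, (∏ b ∈ B, (p - β b)) / ∏ q ∈ s.erase p, (p - q)
      = ∑ p ∈ s, T.eval p * (Lagrange.basis s id p).coeff (s.card - 1) := by
        refine Finset.sum_congr rfl fun p hp => ?_
        rw [hbasis p hp, heval p hp, div_eq_mul_inv, ← Finset.prod_inv_distrib]
        congr 1
        rw [hN]
        simp [Polynomial.eval_prod]
    _ = T.coeff (s.card - 1) := hcoeff.symm
    _ = ∑ p ∈ s, p - ∑ b ∈ B, β b := by rw [hTc]; ring

/-- crossing relations.  For any GT `n`-parallelogram `t`
framed by `P/Q` and any color `i`, the difference between the sum of the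
products `X_{t,s}·Y_{s,t}` over edges `s →^i t` and the sum of the products
`X_{u,t}·Y_{t,u}` over edges `t →^i u` equals
`2·Σ_{k∈C_i} g_{i,k}(t) − Σ_{k∈C_{i+1}} g_{i+1,k}(t) − Σ_{k∈C_{i−1}} g_{i−1,k}(t)`. -/
theorem crossing_relations
    (m n : ℕ) (P Q : ℕ → ℤ) (h : ShapeHyps m n P Q)
    (t : ℕ → ℕ → ℤ) (ht : IsGT m n P Q t)
    (i : ℕ) (hi1 : 1 ≤ i) (hi2 : i < n) :
    (∑ᶠ s ∈ {s : ℕ → ℕ → ℤ | IsGT m n P Q s ∧ Edge m i s t}, XE m i s t * YE m i s t)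
      - (∑ᶠ u ∈ {u : ℕ → ℕ → ℤ | IsGT m n P Q u ∧ Edge m i t u}, XE m i t u * YE m i t u)
    = ((2 * (∑ k ∈ Finset.range m, t i k)
        - (∑ k ∈ Finset.range m, t (i + 1) k)
        - (∑ k ∈ Finset.range m, t (i - 1) k) : ℤ) : ℚ) := by
  classical
  have hm2 : 2 ≤ m := le_trans h.1 h.2.1
  have hm0 : 0 < m := by omega
  have ht3' := ht.2.2.1
  have ht4' := ht.2.2.2.1
  -- integer row data
  set Xi : ℕ → ℤ := fun j => t i j - j with hXi
  set Yi : ℕ → ℤ := fun j => t (i + 1) j - j with hYi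
  set Zi : ℕ → ℤ := fun j => t (i - 1) j - j with hZi
  have hmono : ∀ j l, j ≤ l → l < m → t i l ≤ t i j := by
    intro j l hjl hlm
    induction l, hjl using Nat.le_induction with
    | base => exact le_refl _
    | succ l hjl ih =>
      have h3 := ht3' i hi2 (l + 1) hlm
      have h4 := ht4' i hi2 l hlm
      have h5 := ih (by omega)
      omega
  have hXanti : ∀ j l, j < l → l < m → Xi l < Xi j := by
    intro j l hjl hlm
    have := hmono j l (by omega) hlm
    simp only [hXi]
    omega
  have hXanti2 : ∀ j l, j + 1 < l → l < m → Xi l < Xi j - 1 := by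
    intro j l hjl hlm
    have h1 := hXanti j (j + 1) (by omega) (by omega)
    have h2 := hXanti (j + 1) l (by omega) hlm
    omega
  have hXinj : ∀ j l, j < m → l < m → Xi j = Xi l → j = l := by
    intro j l hj hl he
    rcases lt_trichotomy j l with h' | h' | h'
    · have := hXanti j l h' hl; omega
    · exact h'
    · have := hXanti l j h' hj; omega
  have hZX : ∀ j, j < m → Zi j ≤ Xi j := by
    intro j hj
    have h3 := ht3' (i - 1) (by omega) j hj
    rw [show i - 1 + 1 = i by omega] at h3
    simp only [hZi, hXi]
    omega
  have hXY : ∀ j, j < m → Xi j ≤ Yi j := by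
    intro j hj
    have := ht3' i hi2 j hj
    simp only [hXi, hYi]
    omega
  have hYX : ∀ j, j + 1 < m → Yi (j + 1) ≤ Xi j - 1 := by
    intro j hj
    have := ht4' i hi2 j hj
    simp only [hXi, hYi]
    push_cast
    omega
  have hXZ : ∀ j, j + 1 < m → Xi (j + 1) + 1 ≤ Zi j := by
    intro j hj
    have h4 := ht4' (i - 1) (by omega) j hj
    rw [show i - 1 + 1 = i by omega] at h4
    simp only [hXi, hZi]
    push_cast
    omega
  -- collision predicate
  set Kp : ℕ → Prop := fun κ => κ + 1 < m ∧ Xi (κ + 1) = Xi κ - 1 with hKp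
  have hKlt : ∀ κ, Kp κ → κ + 1 < m := fun κ hκ => hκ.1
  have hcolY : ∀ κ, Kp κ → Yi (κ + 1) = Xi κ - 1 := by
    intro κ hκ
    have h0 := hκ.2
    have h1 := hXY (κ + 1) hκ.1
    have h2 := hYX κ hκ.1
    omega
  have hcolZ : ∀ κ, Kp κ → Zi κ = Xi κ := by
    intro κ hκ
    have h0 := hκ.2
    have h1 := hXZ κ hκ.1
    have h2 := hZX κ (by have := hκ.1; omega)
    omega
  -- finsets
  set s₁ : Finset ℕ := (Finset.range m).filter (fun j => j = 0 ∨ ¬ Kp (j - 1)) with hs₁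
  set s₂ : Finset ℕ := (Finset.range m).filter (fun j => ¬ Kp j) with hs₂
  set Kst : Finset ℕ := (Finset.range m).filter Kp with hKst
  -- rational data
  set Xq : ℕ → ℚ := fun j => ((Xi j : ℤ) : ℚ) with hXq
  set Yq : ℕ → ℚ := fun j => ((Yi j : ℤ) : ℚ) with hYq
  set Zq : ℕ → ℚ := fun j => ((Zi j : ℤ) : ℚ) with hZq
  set NY : ℕ → ℚ := fun κ => ∏ l ∈ Finset.range m, (Xq κ - Yq l - 1) with hNY
  set NZ : ℕ → ℚ := fun κ => ∏ l ∈ Finset.range m, (Xq κ - Zq l) with hNZ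
  set NY' : ℕ → ℚ := fun κ => ∏ l ∈ Finset.range m, (Xq κ - Yq l) with hNY'
  set NZ' : ℕ → ℚ := fun κ => ∏ l ∈ Finset.range m, (Xq κ - Zq l + 1) with hNZ'
  set D1 : ℕ → ℚ := fun κ => ∏ l ∈ (Finset.range m).erase κ, (Xq κ - Xq l - 1) with hD1
  set D2 : ℕ → ℚ := fun κ => ∏ l ∈ (Finset.range m).erase κ, (Xq κ - Xq l) with hD2
  set D1' : ℕ → ℚ := fun κ => ∏ l ∈ (Finset.range m).erase κ, (Xq κ - Xq l + 1) with hD1'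
  set Fterm : ℕ → ℚ := fun κ => (-NY κ / D1 κ) * (NZ κ / D2 κ) with hFterm
  set Gterm : ℕ → ℚ := fun κ => (-NY' κ / D2 κ) * (NZ' κ / D1' κ) with hGterm
  -- identification of the coefficients
  have hXcoefT : ∀ κ, Xcoef m i κ t = -NY κ / D1 κ := by
    intro κ
    unfold Xcoef
    rw [neg_div, neg_div]
    congr 1
    congr 1
    · rw [hNY]
      refine Finset.prod_congr rfl fun l _ => ?_
      simp only [hXq, hYq, hXi, hYi]
      push_cast
      ring
    · rw [hD1]
      refine Finset.prod_congr rfl fun l _ => ?_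
      simp only [hXq, hXi]
      push_cast
      ring
  have hYcoefT : ∀ κ, Ycoef m i κ t = NZ κ / D2 κ := by
    intro κ
    unfold Ycoef
    congr 1
    · rw [hNZ]
      refine Finset.prod_congr rfl fun l _ => ?_
      simp only [hXq, hZq, hXi, hZi]
      push_cast
      ring
    · rw [hD2]
      refine Finset.prod_congr rfl fun l _ => ?_
      simp only [hXq, hXi]
      push_cast
      ring
  have hXcoefR : ∀ κ, Xcoef m i κ (raiseAt t i κ) = -NY' κ / D2 κ := by
    intro κ
    unfold Xcoef
    rw [neg_div, neg_div]
    congr 1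
    congr 1
    · rw [hNY']
      refine Finset.prod_congr rfl fun l _ => ?_
      rw [raiseAt_self, raiseAt_ne t i κ (by omega)]
      simp only [hXq, hYq, hXi, hYi]
      push_cast
      ring
    · rw [hD2]
      refine Finset.prod_congr rfl fun l hl => ?_
      rw [raiseAt_self, raiseAt_ne t i κ (by have := Finset.mem_erase.mp hl; tauto)]
      simp only [hXq, hXi]
      push_cast
      ring
  have hYcoefR : ∀ κ, Ycoef m i κ (raiseAt t i κ) = NZ' κ / D1' κ := by
    intro κ
    unfold Ycoef
    congr 1
    · rw [hNZ']
      refine Finset.prod_congr rfl fun l _ => ?_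
      rw [raiseAt_self, raiseAt_ne t i κ (by omega)]
      simp only [hXq, hZq, hXi, hZi]
      push_cast
      ring
    · rw [hD1']
      refine Finset.prod_congr rfl fun l hl => ?_
      rw [raiseAt_self, raiseAt_ne t i κ (by have := Finset.mem_erase.mp hl; tauto)]
      simp only [hXq, hXi]
      push_cast
      ring
  -- nonvanishing of denominators
  have hD2ne : ∀ κ, κ < m → D2 κ ≠ 0 := by
    intro κ hκm
    rw [hD2]
    rw [Finset.prod_ne_zero_iff]
    intro l hl h0
    obtain ⟨hlκ, hlm'⟩ := Finset.mem_erase.mp hl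
    have hlm := Finset.mem_range.mp hlm'
    simp only [hXq] at h0
    have h1 : Xi κ = Xi l := by exact_mod_cast sub_eq_zero.mp h0
    exact hlκ (hXinj l κ hlm hκm h1.symm)
  have hD1ne : ∀ κ, κ < m → ¬ Kp κ → D1 κ ≠ 0 := by
    intro κ hκm hκK
    rw [hD1, Finset.prod_ne_zero_iff]
    intro l hl h0
    obtain ⟨hlκ, hlm'⟩ := Finset.mem_erase.mp hl
    have hlm := Finset.mem_range.mp hlm'
    simp only [hXq] at h0
    have h1 : Xi κ - Xi l - 1 = 0 := by
      have h2 : ((Xi κ - Xi l - 1 : ℤ) : ℚ) = 0 := by push_cast; linarith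
      exact_mod_cast h2
    rcases Nat.lt_or_ge l (κ + 1) with hc | hc
    · have := hXanti l κ (by omega) hκm
      omega
    · rcases Nat.eq_or_lt_of_le hc with hc2 | hc2
      · subst hc2
        refine hκK ⟨by omega, ?_⟩
        omega
      · have := hXanti2 κ l (by omega) hlm
        omega
  have hD1'ne : ∀ κ, κ < m → (κ = 0 ∨ ¬ Kp (κ - 1)) → D1' κ ≠ 0 := by
    intro κ hκm hκ₀
    rw [hD1', Finset.prod_ne_zero_iff]
    intro l hl h0
    obtain ⟨hlκ, hlm'⟩ := Finset.mem_erase.mp hl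
    have hlm := Finset.mem_range.mp hlm'
    simp only [hXq] at h0
    have h1 : Xi l - Xi κ - 1 = 0 := by
      have h2 : ((Xi l - Xi κ - 1 : ℤ) : ℚ) = 0 := by push_cast; linarith
      exact_mod_cast h2
    rcases Nat.lt_or_ge κ (l + 1) with hc | hc
    · have := hXanti κ l (by omega) hlm
      omega
    · rcases Nat.eq_or_lt_of_le hc with hc2 | hc2
      · subst hc2
        rcases hκ₀ with h00 | hnK
        · omega
        · refine hnK ⟨by omega, ?_⟩
          simp only [Nat.add_sub_cancel]
          omega
      · have := hXanti2 l κ (by omega) hκm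
        omega
  -- vanishing lemmas
  have hNZzero : ∀ κ, κ < m → Zi κ = Xi κ → NZ κ = 0 := by
    intro κ hκm hz
    rw [hNZ]
    refine Finset.prod_eq_zero (Finset.mem_range.mpr hκm) ?_
    simp only [hXq, hZq, hz]
    ring
  have hNYzero : ∀ κ, κ + 1 < m → Yi (κ + 1) = Xi κ - 1 → NY κ = 0 := by
    intro κ hκm hy
    rw [hNY]
    refine Finset.prod_eq_zero (Finset.mem_range.mpr hκm) ?_
    simp only [hXq, hYq, hy]
    push_cast
    ring
  have hNY'zero : ∀ κ, κ < m → Yi κ = Xi κ → NY' κ = 0 := by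
    intro κ hκm hy
    rw [hNY']
    refine Finset.prod_eq_zero (Finset.mem_range.mpr hκm) ?_
    simp only [hXq, hYq, hy]
    ring
  have hNZ'zero : ∀ κ, 1 ≤ κ → κ < m → Zi (κ - 1) = Xi κ + 1 → NZ' κ = 0 := by
    intro κ hκ1 hκm hz
    rw [hNZ']
    refine Finset.prod_eq_zero (Finset.mem_range.mpr (show κ - 1 < m by omega)) ?_
    simp only [hXq, hZq, hz]
    push_cast
    ring
  -- edge-admissibility predicates
  set lowOK : ℕ → Prop := fun κ =>
    t (i - 1) κ ≤ t i κ - 1 ∧ (κ + 1 < m → t (i + 1) (κ + 1) ≤ t i κ - 1) with hlowOK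
  set highOK : ℕ → Prop := fun κ =>
    t i κ + 1 ≤ t (i + 1) κ ∧ (1 ≤ κ → t i κ + 1 ≤ t (i - 1) (κ - 1)) with hhighOK
  have hFzero : ∀ κ, κ < m → ¬ lowOK κ → Fterm κ = 0 := by
    intro κ hκm hOK
    simp only [hlowOK] at hOK
    push_neg at hOK
    simp only [hFterm]
    by_cases h1 : t (i - 1) κ ≤ t i κ - 1
    · obtain ⟨hκ1m, h2⟩ := hOK h1
      have h3 := hYX κ hκ1m
      have h4 : Yi (κ + 1) = Xi κ - 1 := by
        simp only [hYi, hXi] at h3 ⊢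
        push_cast at h3 ⊢
        omega
      rw [hNYzero κ hκ1m h4]
      simp
    · have h2 := hZX κ hκm
      have h4 : Zi κ = Xi κ := by
        simp only [hZi, hXi] at h2 ⊢
        omega
      rw [hNZzero κ hκm h4]
      simp
  have hGzero : ∀ κ, κ < m → ¬ highOK κ → Gterm κ = 0 := by
    intro κ hκm hOK
    simp only [hhighOK] at hOK
    push_neg at hOK
    simp only [hGterm]
    by_cases h1 : t i κ + 1 ≤ t (i + 1) κ
    · obtain ⟨hκ1, h2⟩ := hOK h1
      have h3 := hXZ (κ - 1) (by omega)
      rw [show κ - 1 + 1 = κ by omega] at h3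
      have h4 : Zi (κ - 1) = Xi κ + 1 := by
        simp only [hZi, hXi] at h3 ⊢
        push_cast at h3 ⊢
        omega
      rw [hNZ'zero κ hκ1 hκm h4]
      simp
    · have h2 := hXY κ hκm
      have h4 : Yi κ = Xi κ := by
        simp only [hYi, hXi] at h2 ⊢
        omega
      rw [hNY'zero κ hκm h4]
      simp
  have hFzeroK : ∀ κ, Kp κ → Fterm κ = 0 := by
    intro κ hκ
    simp only [hFterm]
    rw [hNYzero κ hκ.1 (hcolY κ hκ)]
    simp
  have hGzeroK1 : ∀ κ, Kp κ → Gterm (κ + 1) = 0 := by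
    intro κ hκ
    have h4 : Yi (κ + 1) = Xi (κ + 1) := by
      have h1 := hcolY κ hκ
      have h2 := hκ.2
      omega
    simp only [hGterm]
    rw [hNY'zero (κ + 1) hκ.1 h4]
    simp
  -- conversion of the two `finsum`s into finite sums over admissible slots
  have hinjL : ∀ a ∈ (Finset.range m).filter lowOK, ∀ b ∈ (Finset.range m).filter lowOK,
      lowerAt t i a = lowerAt t i b → a = b := by
    intro a _ b _ hab
    by_contra hne
    have h1 := congrFun (congrFun hab i) a
    rw [lowerAt_self, lowerAt_ne t i b (by simp [hne])] at h1
    omega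
  have hinjR : ∀ a ∈ (Finset.range m).filter highOK, ∀ b ∈ (Finset.range m).filter highOK,
      raiseAt t i a = raiseAt t i b → a = b := by
    intro a _ b _ hab
    by_contra hne
    have h1 := congrFun (congrFun hab i) a
    rw [raiseAt_self, raiseAt_ne t i b (by simp [hne])] at h1
    omega
  have hsum1 : (∑ᶠ s ∈ {s : ℕ → ℕ → ℤ | IsGT m n P Q s ∧ Edge m i s t}, XE m i s t * YE m i s t)
      = ∑ κ ∈ (Finset.range m).filter lowOK, Fterm κ := by
    have hset : {s : ℕ → ℕ → ℤ | IsGT m n P Q s ∧ Edge m i s t}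
        = ↑(((Finset.range m).filter lowOK).image (fun κ => lowerAt t i κ)) := by
      ext s
      simp only [Set.mem_setOf_eq, Finset.coe_image, Set.mem_image, Finset.mem_coe,
        Finset.mem_filter, Finset.mem_range]
      constructor
      · rintro ⟨hsGT, κ, he⟩
        refine ⟨κ, ⟨he.1, ?_⟩, he.left_eq.symm⟩
        simp only [hlowOK]
        exact lowOK_of_isGT m n P Q s t hsGT i κ hi1 hi2 he
      · rintro ⟨κ, ⟨hκm, hOK⟩, rfl⟩
        simp only [hlowOK] at hOK
        exact ⟨isGT_lowerAt m n P Q t ht i κ hi1 hi2 hκm hOK.1 hOK.2,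
          κ, edgeAt_lowerAt m i κ t hκm⟩
    rw [hset, finsum_mem_coe_finset, Finset.sum_image hinjL]
    refine Finset.sum_congr rfl fun κ hκ => ?_
    have hκm : κ < m := Finset.mem_range.mp (Finset.mem_filter.mp hκ).1
    rw [XE_eq (edgeAt_lowerAt m i κ t hκm), YE_eq (edgeAt_lowerAt m i κ t hκm),
      hXcoefT κ, hYcoefT κ]
  have hsum2 : (∑ᶠ u ∈ {u : ℕ → ℕ → ℤ | IsGT m n P Q u ∧ Edge m i t u}, XE m i t u * YE m i t u)
      = ∑ κ ∈ (Finset.range m).filter highOK, Gterm κ := by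
    have hset : {u : ℕ → ℕ → ℤ | IsGT m n P Q u ∧ Edge m i t u}
        = ↑(((Finset.range m).filter highOK).image (fun κ => raiseAt t i κ)) := by
      ext u
      simp only [Set.mem_setOf_eq, Finset.coe_image, Set.mem_image, Finset.mem_coe,
        Finset.mem_filter, Finset.mem_range]
      constructor
      · rintro ⟨huGT, κ, he⟩
        refine ⟨κ, ⟨he.1, ?_⟩, he.right_eq.symm⟩
        simp only [hhighOK]
        exact highOK_of_isGT m n P Q t u huGT i κ hi1 hi2 he
      · rintro ⟨κ, ⟨hκm, hOK⟩, rfl⟩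
        simp only [hhighOK] at hOK
        exact ⟨isGT_raiseAt m n P Q t ht i κ hi1 hi2 hκm hOK.1 hOK.2,
          κ, edgeAt_raiseAt m i κ t hκm⟩
    rw [hset, finsum_mem_coe_finset, Finset.sum_image hinjR]
    refine Finset.sum_congr rfl fun κ hκ => ?_
    have hκm : κ < m := Finset.mem_range.mp (Finset.mem_filter.mp hκ).1
    rw [XE_eq (edgeAt_raiseAt m i κ t hκm), YE_eq (edgeAt_raiseAt m i κ t hκm),
      hXcoefR κ, hYcoefR κ]
  -- nonvanishing of the collision products
  have hdKne : ∀ κ, κ < m → ¬ Kp κ → (∏ κ' ∈ Kst, (Xq κ - Xq κ')) ≠ 0 := by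
    intro κ hκm hκK
    rw [Finset.prod_ne_zero_iff]
    intro κ' hκ' h0
    obtain ⟨hκ'm', hκ'K⟩ := Finset.mem_filter.mp hκ'
    simp only [hXq] at h0
    have h1 : Xi κ = Xi κ' := by exact_mod_cast sub_eq_zero.mp h0
    have h2 := hXinj κ κ' hκm (Finset.mem_range.mp hκ'm') h1
    exact hκK (h2 ▸ hκ'K)
  have hdK'ne : ∀ κ, κ < m → (κ = 0 ∨ ¬ Kp (κ - 1)) →
      (∏ κ' ∈ Kst, (Xq κ - Xq κ' + 1)) ≠ 0 := by
    intro κ hκm hκ₀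
    rw [Finset.prod_ne_zero_iff]
    intro κ' hκ' h0
    obtain ⟨hκ'm', hκ'K⟩ := Finset.mem_filter.mp hκ'
    have hκ'm := Finset.mem_range.mp hκ'm'
    simp only [hXq] at h0
    have h1 : Xi κ' - Xi κ - 1 = 0 := by
      have h2 : ((Xi κ' - Xi κ - 1 : ℤ) : ℚ) = 0 := by push_cast; linarith
      exact_mod_cast h2
    rcases Nat.lt_or_ge κ (κ' + 1) with hc | hc
    · rcases Nat.eq_or_lt_of_le (by omega : κ ≤ κ') with hc2 | hc2
      · subst hc2; omega
      · have := hXanti κ κ' hc2 hκ'm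
        omega
    · rcases Nat.eq_or_lt_of_le hc with hc2 | hc2
      · subst hc2
        rcases hκ₀ with h00 | hnK
        · omega
        · simp only [Nat.add_sub_cancel] at hnK
          exact hnK hκ'K
      · have := hXanti2 κ' κ (by omega) hκm
        omega
  -- collision equalities in ℚ
  have hcolXq : ∀ κ', Kp κ' → Xq (κ' + 1) = Xq κ' - 1 := by
    intro κ' hκ'
    have h0 := hκ'.2
    simp only [hXq]
    rw [h0]
    push_cast
    ring
  have hcolYq : ∀ κ', Kp κ' → Yq (κ' + 1) = Xq κ' - 1 := by
    intro κ' hκ'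
    have h0 := hcolY κ' hκ'
    simp only [hXq, hYq]
    rw [h0]
    push_cast
    ring
  have hcolZq : ∀ κ', Kp κ' → Zq κ' = Xq κ' := by
    intro κ' hκ'
    have h0 := hcolZ κ' hκ'
    simp only [hXq, hZq]
    rw [h0]
  -- decomposition of `range m` into the two index families
  set K1 : Finset ℕ := Kst.image (· + 1) with hK1
  have hKstmem : ∀ j, j ∈ Kst ↔ j < m ∧ Kp j := by
    intro j
    rw [hKst, Finset.mem_filter, Finset.mem_range]
  have hs₁mem : ∀ j, j ∈ s₁ ↔ j < m ∧ (j = 0 ∨ ¬ Kp (j - 1)) := by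
    intro j
    rw [hs₁, Finset.mem_filter, Finset.mem_range]
  have hs₂mem : ∀ j, j ∈ s₂ ↔ j < m ∧ ¬ Kp j := by
    intro j
    rw [hs₂, Finset.mem_filter, Finset.mem_range]
  have hK1mem : ∀ j, j ∈ K1 ↔ j ≠ 0 ∧ Kp (j - 1) := by
    intro j
    rw [hK1, Finset.mem_image]
    constructor
    · rintro ⟨κ', hκ', rfl⟩
      obtain ⟨-, hb⟩ := (hKstmem κ').mp hκ'
      exact ⟨by omega, by simpa using hb⟩
    · rintro ⟨h0, hKj⟩
      exact ⟨j - 1, (hKstmem _).mpr ⟨by have := hKlt _ hKj; omega, hKj⟩, by omega⟩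
  have hUnion1 : s₁ ∪ K1 = Finset.range m := by
    ext j
    simp only [Finset.mem_union, Finset.mem_range, hs₁mem, hK1mem]
    constructor
    · rintro (⟨hj, -⟩ | ⟨h0, hK⟩)
      · exact hj
      · have := hKlt _ hK
        omega
    · intro hj
      by_cases hc : j = 0 ∨ ¬ Kp (j - 1)
      · exact Or.inl ⟨hj, hc⟩
      · push_neg at hc
        exact Or.inr ⟨hc.1, hc.2⟩
  have hDisj1 : Disjoint s₁ K1 := by
    rw [Finset.disjoint_left]
    intro j hj hj'
    obtain ⟨-, hor⟩ := (hs₁mem j).mp hj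
    obtain ⟨h0, hK⟩ := (hK1mem j).mp hj'
    tauto
  have hUnion2 : s₂ ∪ Kst = Finset.range m := by
    ext j
    simp only [Finset.mem_union, Finset.mem_range, hs₂mem, hKstmem]
    constructor
    · rintro (⟨hj, -⟩ | ⟨hj, -⟩) <;> exact hj
    · intro hj
      by_cases hc : Kp j
      · exact Or.inr ⟨hj, hc⟩
      · exact Or.inl ⟨hj, hc⟩
  have hDisj2 : Disjoint s₂ Kst := by
    rw [Finset.disjoint_left]
    intro j hj hj'
    exact ((hs₂mem j).mp hj).2 ((hKstmem j).mp hj').2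
  have hUnion1e : ∀ κ₀ ∈ s₁, (s₁.erase κ₀) ∪ K1 = (Finset.range m).erase κ₀ := by
    intro κ₀ hκ₀
    rw [← hUnion1, Finset.erase_union_distrib, Finset.erase_eq_of_notMem
      (fun hmem => Finset.disjoint_left.mp hDisj1 hκ₀ hmem)]
  have hUnion2e : ∀ κ₀ ∈ s₂, (s₂.erase κ₀) ∪ Kst = (Finset.range m).erase κ₀ := by
    intro κ₀ hκ₀
    rw [← hUnion2, Finset.erase_union_distrib, Finset.erase_eq_of_notMem
      (fun hmem => Finset.disjoint_left.mp hDisj2 hκ₀ hmem)]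
  have hDisj1e : ∀ κ₀ : ℕ, Disjoint (s₁.erase κ₀) K1 :=
    fun κ₀ => hDisj1.mono_left (Finset.erase_subset _ _)
  have hDisj2e : ∀ κ₀ : ℕ, Disjoint (s₂.erase κ₀) Kst :=
    fun κ₀ => hDisj2.mono_left (Finset.erase_subset _ _)
  have hprodK1 : ∀ f : ℕ → ℚ, ∏ j ∈ K1, f j = ∏ κ' ∈ Kst, f (κ' + 1) := by
    intro f
    rw [hK1, Finset.prod_image (by intro a _ b _ hab; simp only at hab; omega)]
  have hsub₁ : s₁ ⊆ Finset.range m := fun x hx => Finset.mem_range.mpr ((hs₁mem x).mp hx).1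
  have hsub₂ : s₂ ⊆ Finset.range m := fun x hx => Finset.mem_range.mpr ((hs₂mem x).mp hx).1
  -- the node set
  set A₁ : Finset ℚ := s₁.image Xq with hA₁
  set A₂ : Finset ℚ := s₂.image (fun j => Xq j - 1) with hA₂
  have hinj1 : ∀ a ∈ s₁, ∀ b ∈ s₁, Xq a = Xq b → a = b := by
    intro a ha b hb hab
    simp only [hXq] at hab
    exact hXinj a b ((hs₁mem a).mp ha).1 ((hs₁mem b).mp hb).1 (by exact_mod_cast hab)
  have hinj2 : ∀ a ∈ s₂, ∀ b ∈ s₂, Xq a - 1 = Xq b - 1 → a = b := by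
    intro a ha b hb hab
    simp only [hXq] at hab
    have hab' : Xi a = Xi b := by
      have : ((Xi a : ℤ) : ℚ) = ((Xi b : ℤ) : ℚ) := by linarith
      exact_mod_cast this
    exact hXinj a b ((hs₂mem a).mp ha).1 ((hs₂mem b).mp hb).1 hab'
  have hdisjA : Disjoint A₁ A₂ := by
    rw [Finset.disjoint_left]
    intro v hv1 hv2
    rw [hA₁, Finset.mem_image] at hv1
    rw [hA₂, Finset.mem_image] at hv2
    obtain ⟨a, ha, rfl⟩ := hv1
    obtain ⟨b, hb, hab⟩ := hv2
    obtain ⟨ham, _⟩ := (hs₁mem a).mp ha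
    obtain ⟨hbm, hb2⟩ := (hs₂mem b).mp hb
    simp only [hXq] at hab
    have h1 : Xi b - 1 = Xi a := by exact_mod_cast hab
    have hone : a = b + 1 := by
      by_contra hne
      rcases lt_trichotomy a b with hlt | heq | hgt
      · have := hXanti a b hlt hbm
        omega
      · subst heq
        omega
      · have := hXanti2 b a (by omega) ham
        omega
    subst hone
    exact hb2 ⟨by omega, by omega⟩
  have hcardAB : (s₁.disjSum s₂).card = (A₁ ∪ A₂).card := by
    rw [Finset.card_disjSum, Finset.card_union_of_disjoint hdisjA, hA₁, hA₂,
      Finset.card_image_of_injOn (fun a ha b hb hab => hinj1 a ha b hb hab),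
      Finset.card_image_of_injOn (fun a ha b hb hab => hinj2 a ha b hb hab)]
  have h0s₁ : (0 : ℕ) ∈ s₁ := (hs₁mem 0).mpr ⟨hm0, Or.inl rfl⟩
  have hAne : (A₁ ∪ A₂).Nonempty :=
    ⟨Xq 0, Finset.mem_union_left _ (by rw [hA₁]; exact Finset.mem_image_of_mem _ h0s₁)⟩
  have hkey := key (A₁ ∪ A₂) hAne (s₁.disjSum s₂) (Sum.elim Yq (fun j => Zq j - 1)) hcardAB
  -- residues at the nodes coming from `s₂` (the `F`-side)
  have hres2 : ∀ κ ∈ s₂,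
      (∏ b ∈ s₁.disjSum s₂, ((Xq κ - 1) - Sum.elim Yq (fun j => Zq j - 1) b)) /
        ∏ q ∈ (A₁ ∪ A₂).erase (Xq κ - 1), ((Xq κ - 1) - q) = Fterm κ := by
    intro κ hκ
    obtain ⟨hκm, hκK⟩ := (hs₂mem κ).mp hκ
    have hdK := hdKne κ hκm hκK
    have hD1n := hD1ne κ hκm hκK
    have hD2n := hD2ne κ hκm
    have hnum : ∏ b ∈ s₁.disjSum s₂, ((Xq κ - 1) - Sum.elim Yq (fun j => Zq j - 1) b)
        = (∏ j ∈ s₁, (Xq κ - 1 - Yq j)) * ∏ j ∈ s₂, (Xq κ - Zq j) := by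
      rw [Finset.prod_disjSum]
      congr 1
      exact Finset.prod_congr rfl fun j _ => by simp only [Sum.elim_inr]; ring
    have hpA2 : (Xq κ - 1) ∈ A₂ := by
      rw [hA₂]; exact Finset.mem_image_of_mem _ hκ
    have hpA1 : (Xq κ - 1) ∉ A₁ := fun hmem => (Finset.disjoint_left.mp hdisjA hmem) hpA2
    have heraseA : (A₁ ∪ A₂).erase (Xq κ - 1)
        = A₁ ∪ (s₂.erase κ).image (fun j => Xq j - 1) := by
      rw [Finset.erase_union_distrib, Finset.erase_eq_of_notMem hpA1]
      congr 1
      rw [hA₂]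
      ext v
      simp only [Finset.mem_erase, Finset.mem_image]
      constructor
      · rintro ⟨hvp, j, hj, rfl⟩
        exact ⟨j, ⟨fun hjκ => hvp (by rw [hjκ]), hj⟩, rfl⟩
      · rintro ⟨j, ⟨hjκ, hj⟩, rfl⟩
        exact ⟨fun hEq => hjκ (hinj2 j hj κ hκ hEq), j, hj, rfl⟩
    have hdisj' : Disjoint A₁ ((s₂.erase κ).image (fun j => Xq j - 1)) :=
      hdisjA.mono_right (by rw [hA₂]; exact Finset.image_subset_image (Finset.erase_subset _ _))
    have hden : ∏ q ∈ (A₁ ∪ A₂).erase (Xq κ - 1), ((Xq κ - 1) - q)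
        = (∏ j ∈ s₁, (Xq κ - 1 - Xq j)) * ∏ j ∈ s₂.erase κ, (Xq κ - Xq j) := by
      rw [heraseA, Finset.prod_union hdisj', hA₁,
        Finset.prod_image (fun a ha b hb hab => hinj1 a ha b hb hab),
        Finset.prod_image (fun a ha b hb hab =>
          hinj2 a (Finset.mem_of_mem_erase ha) b (Finset.mem_of_mem_erase hb) hab)]
      congr 1
      exact Finset.prod_congr rfl fun j _ => by ring
    have e1 : (∏ j ∈ s₁, (Xq κ - 1 - Yq j)) * (∏ κ' ∈ Kst, (Xq κ - Xq κ')) = NY κ := by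
      have hA' : ∏ j ∈ s₁, (Xq κ - 1 - Yq j) = ∏ j ∈ s₁, (Xq κ - Yq j - 1) :=
        Finset.prod_congr rfl fun j _ => by ring
      have hB' : ∏ κ' ∈ Kst, (Xq κ - Xq κ') = ∏ κ' ∈ Kst, (Xq κ - Yq (κ' + 1) - 1) :=
        Finset.prod_congr rfl fun κ' hκ' => by
          rw [hcolYq κ' ((hKstmem κ').mp hκ').2]; ring
      rw [hA', hB']
      simp only [hNY]
      rw [← hUnion1, Finset.prod_union hDisj1, hprodK1 (fun l => Xq κ - Yq l - 1)]
    have e2 : (∏ j ∈ s₂, (Xq κ - Zq j)) * (∏ κ' ∈ Kst, (Xq κ - Xq κ')) = NZ κ := by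
      have hB' : ∏ κ' ∈ Kst, (Xq κ - Xq κ') = ∏ κ' ∈ Kst, (Xq κ - Zq κ') :=
        Finset.prod_congr rfl fun κ' hκ' => by
          rw [hcolZq κ' ((hKstmem κ').mp hκ').2]
      rw [hB']
      simp only [hNZ]
      rw [← hUnion2, Finset.prod_union hDisj2]
    have e3 : (∏ j ∈ s₁, (Xq κ - 1 - Xq j)) * (∏ κ' ∈ Kst, (Xq κ - Xq κ')) = -D1 κ := by
      have hfull : ∏ l ∈ Finset.range m, (Xq κ - Xq l - 1) = -D1 κ := by
        simp only [hD1]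
        rw [← Finset.mul_prod_erase (Finset.range m) _ (Finset.mem_range.mpr hκm)]
        have hmin : Xq κ - Xq κ - 1 = -1 := by ring
        rw [hmin]
        ring
      have hA' : ∏ j ∈ s₁, (Xq κ - 1 - Xq j) = ∏ j ∈ s₁, (Xq κ - Xq j - 1) :=
        Finset.prod_congr rfl fun j _ => by ring
      have hB' : ∏ κ' ∈ Kst, (Xq κ - Xq κ') = ∏ κ' ∈ Kst, (Xq κ - Xq (κ' + 1) - 1) :=
        Finset.prod_congr rfl fun κ' hκ' => by
          rw [hcolXq κ' ((hKstmem κ').mp hκ').2]; ring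
      rw [hA', hB', ← hfull, ← hUnion1, Finset.prod_union hDisj1,
        hprodK1 (fun l => Xq κ - Xq l - 1)]
    have e4 : (∏ j ∈ s₂.erase κ, (Xq κ - Xq j)) * (∏ κ' ∈ Kst, (Xq κ - Xq κ')) = D2 κ := by
      simp only [hD2]
      rw [← hUnion2e κ hκ, Finset.prod_union (hDisj2e κ)]
    rw [hnum, hden]
    have hP1 : (∏ j ∈ s₁, (Xq κ - 1 - Yq j)) = NY κ / (∏ κ' ∈ Kst, (Xq κ - Xq κ')) :=
      (eq_div_iff hdK).mpr e1
    have hP2 : (∏ j ∈ s₂, (Xq κ - Zq j)) = NZ κ / (∏ κ' ∈ Kst, (Xq κ - Xq κ')) :=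
      (eq_div_iff hdK).mpr e2
    have hQ1 : (∏ j ∈ s₁, (Xq κ - 1 - Xq j)) = -D1 κ / (∏ κ' ∈ Kst, (Xq κ - Xq κ')) :=
      (eq_div_iff hdK).mpr e3
    have hQ2 : (∏ j ∈ s₂.erase κ, (Xq κ - Xq j)) = D2 κ / (∏ κ' ∈ Kst, (Xq κ - Xq κ')) :=
      (eq_div_iff hdK).mpr e4
    rw [hP1, hP2, hQ1, hQ2]
    simp only [hFterm]
    field_simp
  -- residues at the nodes coming from `s₁` (the `G`-side)
  have hres1 : ∀ κ ∈ s₁,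
      (∏ b ∈ s₁.disjSum s₂, (Xq κ - Sum.elim Yq (fun j => Zq j - 1) b)) /
        ∏ q ∈ (A₁ ∪ A₂).erase (Xq κ), (Xq κ - q) = -Gterm κ := by
    intro κ hκ
    obtain ⟨hκm, hκ₀⟩ := (hs₁mem κ).mp hκ
    have hdK' := hdK'ne κ hκm hκ₀
    have hD1'n := hD1'ne κ hκm hκ₀
    have hD2n := hD2ne κ hκm
    have hnum : ∏ b ∈ s₁.disjSum s₂, (Xq κ - Sum.elim Yq (fun j => Zq j - 1) b)
        = (∏ j ∈ s₁, (Xq κ - Yq j)) * ∏ j ∈ s₂, (Xq κ - Zq j + 1) := by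
      rw [Finset.prod_disjSum]
      congr 1
      exact Finset.prod_congr rfl fun j _ => by simp only [Sum.elim_inr]; ring
    have hpA1 : Xq κ ∈ A₁ := by
      rw [hA₁]; exact Finset.mem_image_of_mem _ hκ
    have hpA2 : Xq κ ∉ A₂ := fun hmem => (Finset.disjoint_left.mp hdisjA hpA1) hmem
    have heraseA : (A₁ ∪ A₂).erase (Xq κ)
        = (s₁.erase κ).image Xq ∪ A₂ := by
      rw [Finset.erase_union_distrib, Finset.erase_eq_of_notMem hpA2]
      congr 1
      rw [hA₁]
      ext v
      simp only [Finset.mem_erase, Finset.mem_image]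
      constructor
      · rintro ⟨hvp, j, hj, rfl⟩
        exact ⟨j, ⟨fun hjκ => hvp (by rw [hjκ]), hj⟩, rfl⟩
      · rintro ⟨j, ⟨hjκ, hj⟩, rfl⟩
        exact ⟨fun hEq => hjκ (hinj1 j hj κ hκ hEq), j, hj, rfl⟩
    have hdisj' : Disjoint ((s₁.erase κ).image Xq) A₂ :=
      hdisjA.mono_left (by rw [hA₁]; exact Finset.image_subset_image (Finset.erase_subset _ _))
    have hden : ∏ q ∈ (A₁ ∪ A₂).erase (Xq κ), (Xq κ - q)
        = (∏ j ∈ s₁.erase κ, (Xq κ - Xq j)) * ∏ j ∈ s₂, (Xq κ - Xq j + 1) := by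
      rw [heraseA, Finset.prod_union hdisj',
        Finset.prod_image (fun a ha b hb hab =>
          hinj1 a (Finset.mem_of_mem_erase ha) b (Finset.mem_of_mem_erase hb) hab),
        hA₂, Finset.prod_image (fun a ha b hb hab => hinj2 a ha b hb hab)]
      congr 1
      exact Finset.prod_congr rfl fun j _ => by ring
    have f3 : (∏ j ∈ s₁, (Xq κ - Yq j)) * (∏ κ' ∈ Kst, (Xq κ - Xq κ' + 1)) = NY' κ := by
      have hB' : ∏ κ' ∈ Kst, (Xq κ - Xq κ' + 1) = ∏ κ' ∈ Kst, (Xq κ - Yq (κ' + 1)) :=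
        Finset.prod_congr rfl fun κ' hκ' => by
          rw [hcolYq κ' ((hKstmem κ').mp hκ').2]; ring
      rw [hB']
      simp only [hNY']
      rw [← hUnion1, Finset.prod_union hDisj1, hprodK1 (fun l => Xq κ - Yq l)]
    have f4 : (∏ j ∈ s₂, (Xq κ - Zq j + 1)) * (∏ κ' ∈ Kst, (Xq κ - Xq κ' + 1)) = NZ' κ := by
      have hB' : ∏ κ' ∈ Kst, (Xq κ - Xq κ' + 1) = ∏ κ' ∈ Kst, (Xq κ - Zq κ' + 1) :=
        Finset.prod_congr rfl fun κ' hκ' => by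
          rw [hcolZq κ' ((hKstmem κ').mp hκ').2]
      rw [hB']
      simp only [hNZ']
      rw [← hUnion2, Finset.prod_union hDisj2]
    have f1 : (∏ j ∈ s₁.erase κ, (Xq κ - Xq j)) * (∏ κ' ∈ Kst, (Xq κ - Xq κ' + 1)) = D2 κ := by
      have hB' : ∏ κ' ∈ Kst, (Xq κ - Xq κ' + 1) = ∏ κ' ∈ Kst, (Xq κ - Xq (κ' + 1)) :=
        Finset.prod_congr rfl fun κ' hκ' => by
          rw [hcolXq κ' ((hKstmem κ').mp hκ').2]; ring
      rw [hB']
      simp only [hD2]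
      rw [← hUnion1e κ hκ, Finset.prod_union (hDisj1e κ), hprodK1 (fun l => Xq κ - Xq l)]
    have f2 : (∏ j ∈ s₂, (Xq κ - Xq j + 1)) * (∏ κ' ∈ Kst, (Xq κ - Xq κ' + 1)) = D1' κ := by
      have hfull : ∏ l ∈ Finset.range m, (Xq κ - Xq l + 1) = D1' κ := by
        simp only [hD1']
        rw [← Finset.mul_prod_erase (Finset.range m) _ (Finset.mem_range.mpr hκm)]
        have hone : Xq κ - Xq κ + 1 = 1 := by ring
        rw [hone, one_mul]
      rw [← hfull, ← hUnion2, Finset.prod_union hDisj2]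
    rw [hnum, hden]
    have hP1 : (∏ j ∈ s₁, (Xq κ - Yq j)) = NY' κ / (∏ κ' ∈ Kst, (Xq κ - Xq κ' + 1)) :=
      (eq_div_iff hdK').mpr f3
    have hP2 : (∏ j ∈ s₂, (Xq κ - Zq j + 1)) = NZ' κ / (∏ κ' ∈ Kst, (Xq κ - Xq κ' + 1)) :=
      (eq_div_iff hdK').mpr f4
    have hQ1 : (∏ j ∈ s₁.erase κ, (Xq κ - Xq j)) = D2 κ / (∏ κ' ∈ Kst, (Xq κ - Xq κ' + 1)) :=
      (eq_div_iff hdK').mpr f1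
    have hQ2 : (∏ j ∈ s₂, (Xq κ - Xq j + 1)) = D1' κ / (∏ κ' ∈ Kst, (Xq κ - Xq κ' + 1)) :=
      (eq_div_iff hdK').mpr f2
    rw [hP1, hP2, hQ1, hQ2]
    simp only [hGterm]
    field_simp
  -- put the key identity together
  have hkeysplit : (∑ κ ∈ s₂, Fterm κ) - ∑ κ ∈ s₁, Gterm κ
      = (∑ p ∈ A₁ ∪ A₂, p) - ∑ b ∈ s₁.disjSum s₂, Sum.elim Yq (fun j => Zq j - 1) b := by
    rw [← hkey, Finset.sum_union hdisjA, hA₁, hA₂,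
      Finset.sum_image (fun a ha b hb hab => hinj1 a ha b hb hab),
      Finset.sum_image (fun a ha b hb hab => hinj2 a ha b hb hab)]
    rw [Finset.sum_congr rfl hres1, Finset.sum_congr rfl hres2, Finset.sum_neg_distrib]
    ring
  -- assembling everything
  rw [hsum1, hsum2]
  have hF1 : ∑ κ ∈ (Finset.range m).filter lowOK, Fterm κ = ∑ κ ∈ Finset.range m, Fterm κ :=
    Finset.sum_subset (Finset.filter_subset _ _) (fun x hx hnx =>
      hFzero x (Finset.mem_range.mp hx) fun hOK => hnx (Finset.mem_filter.mpr ⟨hx, hOK⟩))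
  have hG1 : ∑ κ ∈ (Finset.range m).filter highOK, Gterm κ = ∑ κ ∈ Finset.range m, Gterm κ :=
    Finset.sum_subset (Finset.filter_subset _ _) (fun x hx hnx =>
      hGzero x (Finset.mem_range.mp hx) fun hOK => hnx (Finset.mem_filter.mpr ⟨hx, hOK⟩))
  have hF2 : ∑ κ ∈ Finset.range m, Fterm κ = ∑ κ ∈ s₂, Fterm κ :=
    (Finset.sum_subset hsub₂ (fun x hx hnx => by
      have hK : Kp x := by
        by_contra hc
        exact hnx ((hs₂mem x).mpr ⟨Finset.mem_range.mp hx, hc⟩)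
      exact hFzeroK x hK)).symm
  have hG2 : ∑ κ ∈ Finset.range m, Gterm κ = ∑ κ ∈ s₁, Gterm κ :=
    (Finset.sum_subset hsub₁ (fun x hx hnx => by
      have hK : x ≠ 0 ∧ Kp (x - 1) := by
        by_contra hc
        refine hnx ((hs₁mem x).mpr ⟨Finset.mem_range.mp hx, ?_⟩)
        tauto
      have h0 := hGzeroK1 (x - 1) hK.2
      rw [show x - 1 + 1 = x by omega] at h0
      exact h0)).symm
  rw [hF1, hF2, hG1, hG2, hkeysplit]
  rw [Finset.sum_union hdisjA, hA₁, hA₂,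
    Finset.sum_image (fun a ha b hb hab => hinj1 a ha b hb hab),
    Finset.sum_image (fun a ha b hb hab => hinj2 a ha b hb hab),
    Finset.sum_disjSum]
  have hcomb : ((∑ j ∈ s₁, Xq j) + ∑ j ∈ s₂, (Xq j - 1))
      - ((∑ j ∈ s₁, Sum.elim Yq (fun j => Zq j - 1) (Sum.inl j))
        + ∑ j ∈ s₂, Sum.elim Yq (fun j => Zq j - 1) (Sum.inr j))
      = (∑ j ∈ s₁, (Xq j - Yq j)) + ∑ j ∈ s₂, (Xq j - Zq j) := by
    simp only [Sum.elim_inl, Sum.elim_inr]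
    rw [Finset.sum_sub_distrib, Finset.sum_sub_distrib, Finset.sum_sub_distrib,
      Finset.sum_sub_distrib]
    ring
  rw [hcomb]
  have hv1 : ∑ j ∈ s₁, (Xq j - Yq j) = ∑ j ∈ Finset.range m, (Xq j - Yq j) :=
    Finset.sum_subset hsub₁ (fun x hx hnx => by
      have hK : x ≠ 0 ∧ Kp (x - 1) := by
        by_contra hc
        refine hnx ((hs₁mem x).mpr ⟨Finset.mem_range.mp hx, ?_⟩)
        tauto
      have ha := hcolYq (x - 1) hK.2
      have hb := hcolXq (x - 1) hK.2
      rw [show x = x - 1 + 1 by omega, ha, hb]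
      ring)
  have hv2 : ∑ j ∈ s₂, (Xq j - Zq j) = ∑ j ∈ Finset.range m, (Xq j - Zq j) :=
    Finset.sum_subset hsub₂ (fun x hx hnx => by
      have hK : Kp x := by
        by_contra hc
        exact hnx ((hs₂mem x).mpr ⟨Finset.mem_range.mp hx, hc⟩)
      rw [hcolZq x hK]
      ring)
  rw [hv1, hv2]
  push_cast
  rw [Finset.mul_sum, ← Finset.sum_sub_distrib, ← Finset.sum_sub_distrib,
    ← Finset.sum_add_distrib]
  refine Finset.sum_congr rfl fun j _ => ?_
  simp only [hXq, hYq, hZq, hXi, hYi, hZi]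
  push_cast
  ring
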